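/- Let k be an algebraically closed field of characteristic p > 0 and q a power of p, n ≥ 2, 0 ≤ s < n, (n,s) ≠ (2,0). The hypersurface X_s ⊂ P^n defined by x_0^{q+1} + ... + x_{s-1}^{q+1} + x_s^q x_{s+1} + ... + x_{n-2}^q x_{n-1} + x_{n-1}^q x_n = 0 is rational: the projection from its unique singular point P_0 = (0:...:0:1) gives a birational map to P^{n-1}, with inverse (y_0:...:y_{n-1}) ↦ (y_0:...:y_{n-1}: -F_{q+1}(y_0,...,y_{n-1})/y_{n-1}^q) where F_{q+1} = x_0^{q+1}+...+x_{s-1}^{q+1}+x_s^q x_{s+1}+...+x_{n-2}^q x_{n-1}. -/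

import Mathlib

open Matrix

/-- The matrix `W_s = diag(I_s, E_{n-s+1})`. -/
def Wmat (k : Type*) [Field k] (n s : ℕ) : Matrix (Fin (n + 1)) (Fin (n + 1)) k :=
  fun i j =>
    (if i = j ∧ (j : ℕ) < s then 1 else 0) +
    (if (i : ℕ) = (j : ℕ) + 1 ∧ s ≤ (j : ℕ) then 1 else 0)

lemma Wmat_last_col {k : Type*} [Field k] {n s : ℕ} (hs : s < n) (i : Fin (n + 1)) :
    Wmat k n s i (Fin.last n) = 0 := by
  have hi := i.isLt
  simp only [Wmat, Fin.val_last]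
  rw [if_neg, if_neg]
  · ring
  · rintro ⟨h1, -⟩; omega
  · rintro ⟨-, h2⟩; omega

lemma Wmat_last_row {k : Type*} [Field k] {n s : ℕ} (hn : 1 ≤ n) (hs : s < n) (j : Fin n) :
    Wmat k n s (Fin.last n) j.castSucc = if (j : ℕ) = n - 1 then 1 else 0 := by
  have hj := j.isLt
  simp only [Wmat, Fin.val_last, Fin.coe_castSucc]
  rw [if_neg (by rintro ⟨h1, -⟩; have := congrArg Fin.val h1; simp at this; omega)]
  by_cases h : (j : ℕ) = n - 1
  · rw [if_pos ⟨by omega, by omega⟩, if_pos h]; ring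
  · rw [if_neg (by rintro ⟨h1, -⟩; omega), if_neg h]; ring

lemma F_snoc {k : Type*} [Field k] {n s q : ℕ} (hn : 1 ≤ n) (hs : s < n)
    (y : Fin n → k) (c : k) :
    (Fin.snoc y c : Fin (n + 1) → k) ⬝ᵥ
        (Wmat k n s).mulVec (fun i => (Fin.snoc y c : Fin (n + 1) → k) i ^ q)
      = (Fin.snoc y 0 : Fin (n + 1) → k) ⬝ᵥ
          (Wmat k n s).mulVec (fun i => (Fin.snoc y 0 : Fin (n + 1) → k) i ^ q)
        + c * (y ⟨n - 1, by omega⟩) ^ q := by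
  have hA : ∀ (c : k) (i : Fin (n + 1)),
      (Wmat k n s).mulVec (fun j => (Fin.snoc y c : Fin (n + 1) → k) j ^ q) i
        = ∑ j : Fin n, Wmat k n s i j.castSucc * (y j) ^ q := by
    intro c i
    simp only [mulVec, dotProduct]
    rw [Fin.sum_univ_castSucc]
    simp [Wmat_last_col hs]
  have hlast : ∑ j : Fin n, Wmat k n s (Fin.last n) j.castSucc * (y j) ^ q
      = (y ⟨n - 1, by omega⟩) ^ q := by
    rw [Finset.sum_eq_single (⟨n - 1, by omega⟩ : Fin n)]
    · rw [Wmat_last_row hn hs]; simp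
    · intro j _ hj
      rw [Wmat_last_row hn hs, if_neg, zero_mul]
      intro h; exact hj (Fin.ext h)
    · simp
  simp only [dotProduct, hA]
  rw [Fin.sum_univ_castSucc, Fin.sum_univ_castSucc]
  simp only [Fin.snoc_castSucc, Fin.snoc_last, hlast]
  ring

/-- Corollary 2: for `n ≥ 2`, `s < n`, `(n,s) ≠ (2,0)`, the hypersurface `X_s` is rational.
The projection from the unique singular point `P₀ = (0:⋯:0:1)` (in coordinates, dropping
the last coordinate) is a bijection on the loci where `x_{n-1} ≠ 0`, with explicit inverse
`y ↦ (y, -F_{q+1}(y)/y_{n-1}^q)`; here `F_{q+1}(y) = F(y,0)`. -/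
theorem Xs_rational (p q e n s : ℕ) (hp : p.Prime) (he : 0 < e) (hq : q = p ^ e)
    (k : Type*) [Field k] [IsAlgClosed k] [CharP k p]
    (hn : 2 ≤ n) (hs : s < n) (hns : ¬(n = 2 ∧ s = 0)) :
    let F : (Fin (n + 1) → k) → k :=
      fun x => x ⬝ᵥ (Wmat k n s).mulVec (fun i => x i ^ q)
    let S : Set (Fin (n + 1) → k) := {x | F x = 0 ∧ x ⟨n - 1, by omega⟩ ≠ 0}
    let T : Set (Fin n → k) := {y | y ⟨n - 1, by omega⟩ ≠ 0}
    let proj : (Fin (n + 1) → k) → (Fin n → k) := fun x i => x i.castSucc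
    let ext : (Fin n → k) → (Fin (n + 1) → k) :=
      fun y => Fin.snoc y (-(F (Fin.snoc y 0)) / (y ⟨n - 1, by omega⟩) ^ q)
    Set.BijOn proj S T ∧ Set.InvOn ext proj S T := by
  intro F S T proj ext
  have hn1 : n - 1 < n := by omega
  have hF : ∀ (y : Fin n → k) (c : k),
      F (Fin.snoc y c) = F (Fin.snoc y 0) + c * (y ⟨n - 1, hn1⟩) ^ q :=
    fun y c => F_snoc (by omega) hs y c
  have hext : ∀ y : Fin n → k,
      ext y = Fin.snoc y (-(F (Fin.snoc y 0)) / (y ⟨n - 1, hn1⟩) ^ q) := fun _ => rfl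
  have hprojsnoc : ∀ (y : Fin n → k) (c : k), proj (Fin.snoc y c) = y := by
    intro y c; funext i
    show (Fin.snoc y c : Fin (n + 1) → k) i.castSucc = y i
    simp
  have hsnocproj : ∀ x : Fin (n + 1) → k, Fin.snoc (proj x) (x (Fin.last n)) = x :=
    fun x => Fin.snoc_init_self x
  -- MapsTo proj S T
  have hmt1 : Set.MapsTo proj S T := by
    intro x hx
    exact hx.2
  -- MapsTo ext T S
  have hmt2 : Set.MapsTo ext T S := by
    intro y hy
    have hyq : (y ⟨n - 1, hn1⟩) ^ q ≠ 0 := pow_ne_zero _ hy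
    have hidx : (⟨n - 1, by omega⟩ : Fin (n + 1)) = (⟨n - 1, hn1⟩ : Fin n).castSucc := rfl
    constructor
    · show F (ext y) = 0
      rw [hext, hF]
      field_simp
      ring
    · show ext y ⟨n - 1, by omega⟩ ≠ 0
      rw [hext, hidx, Fin.snoc_castSucc]
      exact hy
  -- InvOn
  have hinv : Set.InvOn ext proj S T := by
    constructor
    · intro x hx
      have hyn : proj x ⟨n - 1, hn1⟩ ≠ 0 := hx.2
      have hyq : (proj x ⟨n - 1, hn1⟩) ^ q ≠ 0 := pow_ne_zero _ hyn
      have h0 : F (Fin.snoc (proj x) 0) + x (Fin.last n) * (proj x ⟨n - 1, hn1⟩) ^ q = 0 := by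
        rw [← hF, hsnocproj x]; exact hx.1
      have hc : -(F (Fin.snoc (proj x) 0)) / ((proj x ⟨n - 1, hn1⟩) ^ q) = x (Fin.last n) := by
        rw [div_eq_iff hyq]
        linear_combination -h0
      show Fin.snoc (proj x) (-(F (Fin.snoc (proj x) 0)) / ((proj x ⟨n - 1, hn1⟩) ^ q)) = x
      rw [hc]
      exact hsnocproj x
    · intro y _
      exact hprojsnoc y _
  exact ⟨hinv.bijOn hmt1 hmt2, hinv⟩
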